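/- arXiv:1001.2341 — 2 statements merged into one kernel-verified Lean document; each statement's English description precedes it below -/
import Mathlib

section
/- The assignment sending a diagram (D, R : D → Cat) to the category D ⋉ D' — whose objects are pairs (d, ψ_d) with d ∈ D and ψ_d : R(d) → D' a functor, and whose morphisms (d₁,ψ₁) → (d₂,ψ₂) are pairs (f, φ) with f : d₁ → d₂ in D and φ : ψ₁ ⟹ ψ₂ ∘ R(f) a natural transformation — defines a category, and the assignment (d, ψ_d) ↦ R(d) ⋉_{ψ_d} D' extends to a functor R ⋉ R' : D ⋉ D' → Cat. -/
open CategoryTheory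

universe v₁ u₁ v₂ u₂ v u

variable {D : Type u₁} [Category.{v₁} D] {D' : Type u₂} [Category.{v₂} D']

/-- Objects of `D ⋉ D'`: pairs `(d, ψ_d)` with `d ∈ D` and `ψ_d : R(d) ⥤ D'` a functor. -/
structure DltObj (R : D ⥤ Cat.{v, u}) (D' : Type u₂) [Category.{v₂} D'] where
  d : D
  ψ : R.obj d ⥤ D'

/-- Morphisms `(d₁,ψ₁) → (d₂,ψ₂)`: pairs `(f, φ)` with `f : d₁ → d₂` in `D` and
`φ : ψ₁ ⟹ R(f) ⋙ ψ₂` a natural transformation. -/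
structure DltHom {R : D ⥤ Cat.{v, u}} (X Y : DltObj R D') where
  f : X.d ⟶ Y.d
  φ : X.ψ ⟶ (R.map f).toFunctor ⋙ Y.ψ

variable {R : D ⥤ Cat.{v, u}}

/-- The identity morphism of `D ⋉ D'`. -/
def DltId (X : DltObj R D') : DltHom X X :=
  ⟨𝟙 X.d, eqToHom (by rw [R.map_id]; rfl)⟩

/-- Composition in `D ⋉ D'`. -/
def DltComp {X Y Z : DltObj R D'} (f : DltHom X Y) (g : DltHom Y Z) : DltHom X Z :=
  ⟨f.f ≫ g.f, f.φ ≫ Functor.whiskerLeft (R.map f.f).toFunctor g.φ ≫ eqToHom (by rw [R.map_comp]; rfl)⟩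


section Aux

lemma natTrans_app_congr {C E : Type*} [Category C] [Category E] {F G : C ⥤ E}
    (τ : F ⟶ G) {a b : C} (h : a = b) :
    τ.app b = eqToHom (by rw [h]) ≫ τ.app a ≫ eqToHom (by rw [h]) := by
  subst h; simp

lemma DltHom.ext' {X Y : DltObj R D'} {a b : DltHom X Y} (hf : a.f = b.f)
    (hφ : a.φ = b.φ ≫ eqToHom (by rw [hf])) : a = b := by
  cases a; cases b
  dsimp at hf
  subst hf
  simp only [eqToHom_refl, Category.comp_id] at hφ
  subst hφ
  rfl

/-- The action of `R ⋉ R'` on a morphism of `D ⋉ D'`. -/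
def FmapAux (R' : D' ⥤ Cat.{v, u}) {X Y : DltObj R D'} (f : DltHom X Y) :
    Grothendieck (X.ψ ⋙ R') ⥤ Grothendieck (Y.ψ ⋙ R') :=
  Grothendieck.map (Functor.whiskerRight f.φ R') ⋙ Grothendieck.pre (Y.ψ ⋙ R') (R.map f.f).toFunctor

lemma gobj_ext {C : Type*} [Category C] {F : C ⥤ Cat} {p q : Grothendieck F}
    (h1 : p.base = q.base) (h2 : HEq p.fiber q.fiber) : p = q := by
  cases p; cases q
  dsimp at h1
  subst h1
  dsimp at h2
  rw [eq_of_heq h2]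

lemma cat_eqToHom_obj_heq {A B : Cat} (h : A = B) (x : A) : HEq ((eqToHom h).toFunctor.obj x) x := by
  subst h; rfl

lemma heq_map_eqToHom_app {A : Type*} [Category A] {B : Type*} [Category B]
    {F G : A ⥤ B} (h : F = G) (K : B ⥤ Cat) (b : A)
    {x y : ↑((F ⋙ K).obj b)} (f : x ⟶ y) :
    HEq ((K.map ((eqToHom h).app b)).toFunctor.map f) f := by
  subst h
  rw [show (eqToHom rfl : F ⟶ F).app b = 𝟙 (F.obj b) from rfl, K.map_id]
  rfl

lemma heq_map_map_eqToHom {A : Type*} [Category A] (K : A ⥤ Cat) {a b : A} (h : a = b)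
    {x y : ↑(K.obj a)} (f : x ⟶ y) :
    HEq ((K.map (eqToHom h)).toFunctor.map f) f := by
  subst h
  rw [eqToHom_refl, K.map_id]
  rfl

lemma heq_map_comp {B : Type*} [Category B] (K : B ⥤ Cat) {x y z : B} (s : x ⟶ y) (t : y ⟶ z)
    {a b : ↑(K.obj x)} (w : a ⟶ b) :
    HEq ((K.map (s ≫ t)).toFunctor.map w) ((K.map t).toFunctor.map ((K.map s).toFunctor.map w)) := by
  rw [K.map_comp]; rfl

lemma heq_functor_map_eqToHom_comp {C E : Type*} [Category C] [Category E] (F : C ⥤ E)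
    {a b : C} {c : E} (h : a = b) (g : F.obj b ⟶ c) : F.map (eqToHom h) ≫ g ≍ g := by
  subst h; simp

lemma heq_functor_map_eqToHom_comp' {C E : Type*} [Category C] [Category E] (F : C ⥤ E)
    {a b c : C} (h : a = b) (g : b ⟶ c) : F.map (eqToHom h ≫ g) ≍ F.map g := by
  subst h; simp

lemma Dlt_id_comp (X Y : DltObj R D') (f : DltHom X Y) : DltComp (DltId X) f = f := by
  apply DltHom.ext' (by simp [DltComp, DltId])
  ext a
  simp only [DltComp, DltId, NatTrans.comp_app, Functor.whiskerLeft_app, eqToHom_app]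
  rw [natTrans_app_congr f.φ (Functor.congr_obj (congrArg Cat.Hom.toFunctor (R.map_id X.d)) a).symm]
  simp only [Category.assoc, eqToHom_trans, eqToHom_trans_assoc, eqToHom_refl,
    Category.id_comp, Category.comp_id]
  erw [CategoryTheory.eqToHom_app]
  rfl

lemma Dlt_comp_id (X Y : DltObj R D') (f : DltHom X Y) : DltComp f (DltId Y) = f := by
  apply DltHom.ext' (by simp [DltComp, DltId])
  ext a
  simp [DltComp, DltId, eqToHom_app, eqToHom_map, Cat.eqToHom_app]
  erw [CategoryTheory.eqToHom_app]

lemma Dlt_assoc (W X Y Z : DltObj R D') (f : DltHom W X) (g : DltHom X Y) (h : DltHom Y Z) :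
    DltComp (DltComp f g) h = DltComp f (DltComp g h) := by
  apply DltHom.ext' (by simp [DltComp])
  ext a
  simp only [DltComp, DltId, NatTrans.comp_app, Functor.whiskerLeft_app, eqToHom_app]
  rw [natTrans_app_congr h.φ (Functor.congr_obj (congrArg Cat.Hom.toFunctor (R.map_comp f.f g.f)) a).symm]
  simp only [Category.assoc, eqToHom_trans, eqToHom_trans_assoc, eqToHom_refl,
    Category.id_comp, Category.comp_id]
  erw [CategoryTheory.eqToHom_app, eqToHom_trans]
  rfl

lemma FmapAux_id (R' : D' ⥤ Cat.{v, u}) (X : DltObj R D') :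
    FmapAux R' (DltId X) = 𝟭 (Grothendieck (X.ψ ⋙ R')) := by
  refine CategoryTheory.Functor.ext (fun p => ?_) (fun p q h => ?_)
  · refine gobj_ext (Functor.congr_obj (congrArg Cat.Hom.toFunctor (R.map_id X.d)) p.base) ?_
    show HEq ((R'.map ((DltId X).φ.app p.base)).toFunctor.obj p.fiber) p.fiber
    simp only [DltId, eqToHom_app, eqToHom_map]
    exact cat_eqToHom_obj_heq _ _
  · rw [Grothendieck.eqToHom_eq, Grothendieck.eqToHom_eq]
    fapply Grothendieck.ext
    · simp only [FmapAux, DltId, Functor.comp_map, Grothendieck.map_map, Grothendieck.pre]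
      exact Functor.congr_hom (congrArg Cat.Hom.toFunctor (R.map_id X.d)) h.base
    · simp only [FmapAux, DltId, Functor.comp_map, Grothendieck.map_map, Grothendieck.pre,
        Functor.whiskerRight_app, Grothendieck.map_map_fiber, Functor.id_map, Functor.id_obj]
      simp only [Grothendieck.comp_fiber, eqToHom_map, Cat.eqToHom_app, Grothendieck.comp_base,
        eqToHom_app]
      apply eq_of_heq
      refine (eqToHom_comp_heq ..).trans ((eqToHom_comp_heq ..).trans ?_)
      refine HEq.trans ?_ ((eqToHom_comp_heq ..).trans ((heq_functor_map_eqToHom_comp ..).trans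
        ((eqToHom_comp_heq ..).trans (comp_eqToHom_heq ..)))).symm
      exact (heq_map_eqToHom_app _ R' q.base h.fiber).trans
        (heq_map_map_eqToHom (X.ψ ⋙ R') _ h.fiber).symm

lemma FmapAux_comp (R' : D' ⥤ Cat.{v, u}) {X Y Z : DltObj R D'}
    (f : DltHom X Y) (g : DltHom Y Z) :
    FmapAux R' (DltComp f g) = FmapAux R' f ⋙ FmapAux R' g := by
  refine CategoryTheory.Functor.ext (fun p => ?_) (fun p q h => ?_)
  · refine gobj_ext (Functor.congr_obj (congrArg Cat.Hom.toFunctor (R.map_comp f.f g.f)) p.base) ?_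
    show HEq ((R'.map ((DltComp f g).φ.app p.base)).toFunctor.obj p.fiber) _
    simp only [DltComp, NatTrans.comp_app, Functor.whiskerLeft_app, Functor.map_comp, eqToHom_app,
      eqToHom_map, Cat.Hom.comp_obj]
    exact cat_eqToHom_obj_heq _ _
  · rw [Grothendieck.eqToHom_eq, Grothendieck.eqToHom_eq]
    fapply Grothendieck.ext
    · simp only [FmapAux, DltComp, Functor.comp_map, Grothendieck.map_map, Grothendieck.pre]
      exact Functor.congr_hom (congrArg Cat.Hom.toFunctor (R.map_comp f.f g.f)) h.base
    · simp only [FmapAux, DltComp, Functor.comp_map, Grothendieck.map_map, Grothendieck.pre,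
        Functor.whiskerRight_app, Grothendieck.map_map_fiber, Functor.id_map, Functor.id_obj]
      simp only [Grothendieck.comp_fiber, eqToHom_map, Cat.eqToHom_app, Grothendieck.comp_base,
        eqToHom_app, NatTrans.comp_app, Functor.whiskerLeft_app, Functor.map_comp]
      apply eq_of_heq
      refine (eqToHom_comp_heq ..).trans ((eqToHom_comp_heq ..).trans ?_)
      refine HEq.trans ?_ ((eqToHom_comp_heq ..).trans ((heq_functor_map_eqToHom_comp ..).trans
        ((eqToHom_comp_heq ..).trans (comp_eqToHom_heq ..)))).symm
      refine HEq.trans ?_ (heq_map_map_eqToHom (Z.ψ ⋙ R') _ _).symm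
      refine (heq_map_comp R' _ _ h.fiber).trans ?_
      refine (heq_map_comp R' _ _ _).trans ?_
      rw [Grothendieck.map_map_fiber, Grothendieck.map_map_fiber]
      exact (heq_map_eqToHom_app _ R' q.base _).trans ((eqToHom_comp_heq ..).trans
        (heq_functor_map_eqToHom_comp' ..)).symm

end Aux

/-- `D ⋉ D'` is a category, and `(d, ψ_d) ↦ R(d) ⋉_{ψ_d} D'` (realized as the Grothendieck
construction of `ψ_d ⋙ R'`) extends to a functor `R ⋉ R' : D ⋉ D' ⥤ Cat`: there is an
assignment on morphisms which is prescribed on objects by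
`(a, b) ↦ (R(f)(a), R'(φ_a)(b))` and preserves identities and composition. -/
theorem Dlt_is_category_and_semidirect_extends_to_functor (R' : D' ⥤ Cat.{v, u}) :
    -- category axioms for `D ⋉ D'`
    ((∀ (X Y : DltObj R D') (f : DltHom X Y), DltComp (DltId X) f = f) ∧
     (∀ (X Y : DltObj R D') (f : DltHom X Y), DltComp f (DltId Y) = f) ∧
     (∀ (W X Y Z : DltObj R D') (f : DltHom W X) (g : DltHom X Y) (h : DltHom Y Z),
        DltComp (DltComp f g) h = DltComp f (DltComp g h))) ∧
    -- functoriality of `(d, ψ_d) ↦ R(d) ⋉_{ψ_d} D'`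
    (∃ Fmap : ∀ {X Y : DltObj R D'}, DltHom X Y →
        (Grothendieck (X.ψ ⋙ R') ⥤ Grothendieck (Y.ψ ⋙ R')),
      (∀ {X Y : DltObj R D'} (f : DltHom X Y) (p : Grothendieck (X.ψ ⋙ R')),
        (Fmap f).obj p = ⟨(R.map f.f).toFunctor.obj p.base, (R'.map (f.φ.app p.base)).toFunctor.obj p.fiber⟩) ∧
      (∀ X : DltObj R D', Fmap (DltId X) = 𝟭 (Grothendieck (X.ψ ⋙ R'))) ∧
      (∀ {X Y Z : DltObj R D'} (f : DltHom X Y) (g : DltHom Y Z),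
        Fmap (DltComp f g) = Fmap f ⋙ Fmap g)) := by
  
  refine ⟨⟨Dlt_id_comp, Dlt_comp_id, Dlt_assoc⟩, ⟨fun {X Y} f => FmapAux R' f, ?_, ?_, ?_⟩⟩
  · intro X Y f p
    rfl
  · intro X
    exact FmapAux_id R' X
  · intro X Y Z f g
    exact FmapAux_comp R' f g
end

section
/- Let 𝒮 be a simplicial set with category of simplices S, and ψ : S → SSet a functor. Then the semidirect product category S ⋉_ψ SSet‾ — with objects pairs (a, b) where a is a simplex of 𝒮 and b is a simplex of the simplicial set ψ(a) — is isomorphic to the category of simplices of a bisimplicial set 𝕋, where 𝕋_{m,n} = ⨿_{a ∈ 𝒮_m} ψ(a)_n, with objects the bisimplices and morphisms the bisimplicial operators. -/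
open CategoryTheory

/-- The category-of-simplices functor `SSet ⥤ Cat`. -/
def sElements : SSet.{0} ⥤ Cat.{0, 0} where
  obj X := Cat.of X.Elements
  map f := (CategoryOfElements.map f).toCatHom
  map_id X := by rfl
  map_comp f g := by rfl

namespace SemidirectAux

lemma eqToHom_val {C : Type*} [Category C] {F : C ⥤ Type*} {e e' : F.Elements}
    (h : e = e') : (eqToHom h).val = eqToHom (congrArg Sigma.fst h) := by
  subst h; rfl

variable (X : SSet.{0}) (ψ : X.Elements ⥤ SSet.{0})

/-- The canonical morphism of elements over a simplicial operator. -/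
def elm {m m' : SimplexCategoryᵒᵖ} (α : m ⟶ m') (a : X.obj m) :
    X.elementsMk m a ⟶ X.elementsMk m' (X.map α a) := ⟨α, rfl⟩

lemma master {m m' : SimplexCategoryᵒᵖ} (α : m ⟶ m') (a : X.obj m) {a' : X.obj m'}
    (h : X.map α a = a') {n n' : SimplexCategoryᵒᵖ} (β : n ⟶ n')
    (b : (ψ.obj (X.elementsMk m a)).obj n) :
    HEq ((ψ.map (elm X α a)).app n' ((ψ.obj (X.elementsMk m a)).map β b))
      ((ψ.obj (X.elementsMk m' a')).map β
        ((ψ.map (⟨α, h⟩ : X.elementsMk m a ⟶ X.elementsMk m' a')).app n b)) := by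
  subst h
  exact heq_of_eq (NatTrans.naturality_apply (ψ.map (elm X α a)) β b)

/-- The bisimplicial set `T` with `T (m,n) = Σ a : X m, (ψ a) n`. -/
def T : SimplexCategoryᵒᵖ × SimplexCategoryᵒᵖ ⥤ Type where
  obj mn := Σ a : X.obj mn.1, (ψ.obj (X.elementsMk mn.1 a)).obj mn.2
  map {mn mn'} f := TypeCat.ofHom fun p =>
    ⟨X.map f.1 p.1, (ψ.map (elm X f.1 p.1)).app mn'.2 ((ψ.obj _).map f.2 p.2)⟩
  map_id mn := by
    apply ConcreteCategory.hom_ext; intro p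
    obtain ⟨a, b⟩ := p
    refine Sigma.ext (by simp) ?_
    refine HEq.trans (master X ψ (𝟙 mn.1) a (by simp) (𝟙 mn.2) b) (heq_of_eq ?_)
    show (ψ.obj (X.elementsMk mn.1 a)).map (𝟙 mn.2)
      ((ψ.map (𝟙 (X.elementsMk mn.1 a))).app mn.2 b) = b
    simp
  map_comp {mn₁ mn₂ mn₃} f g := by
    apply ConcreteCategory.hom_ext; intro p
    obtain ⟨a, b⟩ := p
    refine Sigma.ext (by simp) ?_
    refine HEq.trans (master X ψ (f.1 ≫ g.1) a (by simp) (f.2 ≫ g.2) b) (heq_of_eq ?_)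
    have hcomp : (⟨f.1 ≫ g.1, by simp⟩ :
        X.elementsMk mn₁.1 a ⟶ X.elementsMk mn₃.1 (X.map g.1 (X.map f.1 a)))
        = elm X f.1 a ≫ elm X g.1 (X.map f.1 a) := Subtype.ext rfl
    show (ψ.obj _).map (f.2 ≫ g.2) ((ψ.map (⟨f.1 ≫ g.1, by simp⟩ :
        X.elementsMk mn₁.1 a ⟶ X.elementsMk mn₃.1 (X.map g.1 (X.map f.1 a)))).app mn₁.2 b)
      = (ψ.map (elm X g.1 (X.map f.1 a))).app mn₃.2
          ((ψ.obj _).map g.2 ((ψ.map (elm X f.1 a)).app mn₂.2 ((ψ.obj _).map f.2 b)))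
    rw [hcomp, ψ.map_comp]
    show (ψ.obj _).map (f.2 ≫ g.2)
        ((ψ.map (elm X g.1 (X.map f.1 a))).app mn₁.2
          ((ψ.map (elm X f.1 a)).app mn₁.2 b))
      = (ψ.map (elm X g.1 (X.map f.1 a))).app mn₃.2
          ((ψ.obj _).map g.2 ((ψ.map (elm X f.1 a)).app mn₂.2 ((ψ.obj _).map f.2 b)))
    simp only [FunctorToTypes.map_comp_apply, FunctorToTypes.naturality]

/-- The comparison functor. -/
def G : Grothendieck (ψ ⋙ sElements) ⥤ (T X ψ).Elements where
  obj P := ⟨(P.base.1, P.fiber.1), P.base.2, P.fiber.2⟩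
  map {P Q} F := ⟨(F.base.1, F.fiber.1),
    Sigma.ext F.base.2
      (HEq.trans (master X ψ F.base.1 P.base.2 F.base.2 F.fiber.1 P.fiber.2)
        (heq_of_eq F.fiber.2))⟩
  map_id P := by
    apply Subtype.ext
    refine Prod.ext rfl ?_
    show (Grothendieck.Hom.fiber (𝟙 P)).val = 𝟙 P.fiber.1
    rw [Grothendieck.id_fiber]
    exact (eqToHom_val _).trans (eqToHom_refl _ _)
  map_comp {P Q R} F F' := by
    apply Subtype.ext
    refine Prod.ext rfl ?_
    show (Grothendieck.Hom.fiber (F ≫ F')).val = F.fiber.val ≫ F'.fiber.val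
    rw [Grothendieck.comp_fiber]
    erw [CategoryOfElements.comp_val, CategoryOfElements.comp_val, eqToHom_val]
    show eqToHom _ ≫ F.fiber.val ≫ F'.fiber.val = F.fiber.val ≫ F'.fiber.val
    exact (congrArg (· ≫ _) (eqToHom_refl _ _)).trans (Category.id_comp _)

instance : (G X ψ).Faithful where
  map_injective {P Q} F F' h := by
    have h' := congrArg Subtype.val h
    have hb : F.base.1 = F'.base.1 := congrArg Prod.fst h'
    have hf : F.fiber.1 = F'.fiber.1 := congrArg Prod.snd h'
    have hbase : F.base = F'.base := Subtype.ext hb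
    refine Grothendieck.ext F F' hbase ?_
    apply Subtype.ext
    erw [CategoryOfElements.comp_val, eqToHom_val]
    show eqToHom _ ≫ F.fiber.val = F'.fiber.val
    simp [hf]
    exact (congrArg (· ≫ _) (eqToHom_refl _ _)).trans (Category.id_comp _)

instance : (G X ψ).Full where
  map_surjective {P Q} φ := by
    refine ⟨⟨⟨φ.1.1, (Sigma.ext_iff.mp φ.2).1⟩, ⟨φ.1.2, ?_⟩⟩, Subtype.ext rfl⟩
    exact eq_of_heq
      ((master X ψ φ.1.1 P.base.2 (Sigma.ext_iff.mp φ.2).1 φ.1.2 P.fiber.2).symm.trans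
        (Sigma.ext_iff.mp φ.2).2)

instance : (G X ψ).EssSurj where
  mem_essImage P :=
    ⟨{ base := X.elementsMk P.1.1 P.2.1, fiber := Functor.elementsMk _ P.1.2 P.2.2 },
      ⟨Iso.refl _⟩⟩

instance : (G X ψ).IsEquivalence := {}

end SemidirectAux

/-- Let `𝒮` be a simplicial set with category of simplices `S` and `ψ : S ⥤ SSet` a functor.
The semidirect product category `S ⋉_ψ SSet‾` (realized as the Grothendieck construction of
`ψ ⋙ R`, with objects the pairs `(a, b)` of a simplex `a` of `𝒮` and a simplex `b` of
`ψ(a)`) is isomorphic to the category of simplices of the bisimplicial set `𝕋` with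
`𝕋_{m,n} = ⨿_{a ∈ 𝒮_m} ψ(a)_n`. -/
theorem semidirect_is_category_of_simplices_of_bisimplicial
    (X : SSet.{0}) (ψ : X.Elements ⥤ SSet.{0}) :
    ∃ T : SimplexCategoryᵒᵖ × SimplexCategoryᵒᵖ ⥤ Type,
      (∀ mn : SimplexCategoryᵒᵖ × SimplexCategoryᵒᵖ,
        T.obj mn = Σ a : X.obj mn.1, (ψ.obj (X.elementsMk mn.1 a)).obj mn.2) ∧
      Nonempty (T.Elements ≌ Grothendieck (ψ ⋙ sElements)) := by
  exact ⟨SemidirectAux.T X ψ, fun _ => rfl, ⟨(SemidirectAux.G X ψ).asEquivalence.symm⟩⟩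
end
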